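/- Let $g \ge 1$ and let $G$ be a group containing elements $c_1,\dots,c_{2g+1}$ satisfying the braid relations. Set $d_j = c_{j+1} c_j c_{j+1}^{-1}$, $\bar d_j = c_{j+1}^{-1} c_j c_{j+1}$, and $f_j = (c_{j-1} c_{j+1})^{-1} \bar d_j (c_{j-1} c_{j+1})$ with the convention $c_0 = 1$. Then the sequence $(c_1, c_2, \dots, c_{2g+1})$ repeated $4$ times (length $8g+4$) is Hurwitz equivalent to the sequence $(d_1, d_2, \dots, d_{2g}, c_1, c_1, c_3, c_3, \dots, c_{2g-1}, c_{2g-1}, c_{2g+1}, \dots, c_{2g+1}, f_2, f_4, \dots, f_{2g}, \bar d_2, \bar d_4, \dots, \bar d_{2g})$, where $c_{2g+1}$ is repeated $2g+4$ times. -/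

import Mathlib

set_option linter.unusedSectionVars false

/-- One elementary (Hurwitz) transformation of sequences in a group. -/
def HurwitzStep {G : Type*} [Group G] (s t : List G) : Prop :=
  ∃ (l₁ l₂ : List G) (x y : G),
    (s = l₁ ++ x :: y :: l₂ ∧ t = l₁ ++ (x * y * x⁻¹) :: x :: l₂) ∨
    (s = l₁ ++ x :: y :: l₂ ∧ t = l₁ ++ y :: (y⁻¹ * x * y) :: l₂)

/-- Hurwitz equivalence: finitely many elementary transformations. -/
def HurwitzEquiv {G : Type*} [Group G] : List G → List G → Prop :=
  Relation.ReflTransGen HurwitzStep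

infix:50 " ≋ " => HurwitzEquiv

/-- The sequence `a m, a (m+1), …, a k` (ascending indices). -/
def seqAsc {G : Type*} (a : ℕ → G) (m k : ℕ) : List G :=
  (List.range (k + 1 - m)).map fun i => a (m + i)

namespace Hur
variable {G : Type*} [Group G]


theorem step_symm : ∀ {s t : List G}, HurwitzStep s t → HurwitzStep t s := by
  rintro s t ⟨l₁, l₂, x, y, ⟨h1, h2⟩ | ⟨h1, h2⟩⟩
  · exact ⟨l₁, l₂, x * y * x⁻¹, x, Or.inr ⟨h2, by rw [h1]; congr 2; group⟩⟩
  · exact ⟨l₁, l₂, y, y⁻¹ * x * y, Or.inl ⟨h2, by rw [h1]; congr 2; group⟩⟩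

theorem equiv_refl (s : List G) : s ≋ s := Relation.ReflTransGen.refl

theorem equiv_of_eq {s t : List G} (h : s = t) : s ≋ t := h ▸ equiv_refl s

theorem equiv_symm {s t : List G} (h : s ≋ t) : t ≋ s :=
  by
    induction h with
    | refl => exact equiv_refl _
    | tail _ hst ih => exact Relation.ReflTransGen.head (step_symm hst) ih

theorem equiv_trans {s t u : List G} (h : s ≋ t) (h' : t ≋ u) : s ≋ u :=
  Relation.ReflTransGen.trans h h'

instance : Trans (α := List G) HurwitzEquiv HurwitzEquiv HurwitzEquiv := ⟨equiv_trans⟩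

theorem step_append (l r : List G) {s t : List G} (h : HurwitzStep s t) :
    HurwitzStep (l ++ s ++ r) (l ++ t ++ r) := by
  obtain ⟨l₁, l₂, x, y, ⟨h1, h2⟩ | ⟨h1, h2⟩⟩ := h
  · exact ⟨l ++ l₁, l₂ ++ r, x, y, Or.inl ⟨by simp [h1], by simp [h2]⟩⟩
  · exact ⟨l ++ l₁, l₂ ++ r, x, y, Or.inr ⟨by simp [h1], by simp [h2]⟩⟩

theorem equiv_append (l r : List G) {s t : List G} (h : s ≋ t) :
    l ++ s ++ r ≋ l ++ t ++ r := by
  induction h with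
  | refl => exact equiv_refl _
  | tail _ hst ih => exact ih.tail (step_append l r hst)

theorem equiv_cons (a : G) {s t : List G} (h : s ≋ t) : a :: s ≋ a :: t := by
  simpa using equiv_append [a] [] h

theorem equiv_append_left (l : List G) {s t : List G} (h : s ≋ t) : l ++ s ≋ l ++ t := by
  simpa using equiv_append l [] h

theorem equiv_append_right (r : List G) {s t : List G} (h : s ≋ t) : s ++ r ≋ t ++ r := by
  simpa using equiv_append [] r h

theorem pairL (x y : G) : [x, y] ≋ [y, y⁻¹ * x * y] :=
  Relation.ReflTransGen.single ⟨[], [], x, y, Or.inr ⟨rfl, rfl⟩⟩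

theorem pairR (x y : G) : [x, y] ≋ [x * y * x⁻¹, x] :=
  Relation.ReflTransGen.single ⟨[], [], x, y, Or.inl ⟨rfl, rfl⟩⟩

theorem pairL' {x y z : G} (h : y⁻¹ * x * y = z) : [x, y] ≋ [y, z] := h ▸ pairL x y

theorem pairR' {x y z : G} (h : x * y * x⁻¹ = z) : [x, y] ≋ [z, x] := h ▸ pairR x y

theorem swap {x y : G} (h : Commute x y) : [x, y] ≋ [y, x] :=
  pairL' (by rw [mul_assoc, h.eq, ← mul_assoc, inv_mul_cancel, one_mul])

theorem move_right (x : G) (l : List G) (h : ∀ a ∈ l, Commute x a) :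
    x :: l ≋ l ++ [x] := by
  induction l with
  | nil => exact equiv_refl _
  | cons a l ih =>
    have h1 : x :: a :: l ≋ a :: x :: l := by
      simpa using equiv_append [] l (swap (h a (by simp)))
    exact h1.trans (equiv_cons a (ih fun b hb => h b (by simp [hb])))

theorem move_left (x : G) (l : List G) (h : ∀ a ∈ l, Commute x a) :
    l ++ [x] ≋ x :: l := equiv_symm (move_right x l h)

theorem block_right (l₁ l₂ : List G) (h : ∀ a ∈ l₁, ∀ b ∈ l₂, Commute a b) :
    l₁ ++ l₂ ≋ l₂ ++ l₁ := by
  induction l₁ with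
  | nil => simp [equiv_refl]
  | cons x l₁ ih =>
    have h1 : x :: (l₁ ++ l₂) ≋ x :: (l₂ ++ l₁) :=
      equiv_cons x (ih fun a ha b hb => h a (by simp [ha]) b hb)
    have h2 : x :: (l₂ ++ l₁) ≋ l₂ ++ x :: l₁ := by
      have := equiv_append_right l₁ (move_right x l₂ fun b hb => h x (by simp) b hb)
      simpa using this
    simpa using equiv_trans h1 h2

/-! ### Group identities from braid relations -/

theorem id1 {a b : G} (h : a * b * a = b * a * b) :
    (b * a * b⁻¹)⁻¹ * a * (b * a * b⁻¹) = b := by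
  have key : a * (b * a * b⁻¹) = (b * a * b⁻¹) * b := by
    have h2 : a * (b * a * b⁻¹) = (a * b * a) * b⁻¹ := by group
    rw [h2, h]; group
  calc (b * a * b⁻¹)⁻¹ * a * (b * a * b⁻¹)
      = (b * a * b⁻¹)⁻¹ * (a * (b * a * b⁻¹)) := by group
    _ = (b * a * b⁻¹)⁻¹ * ((b * a * b⁻¹) * b) := by rw [key]
    _ = b := by group

theorem id2 {a b : G} (h : a * b * a = b * a * b) :
    (b * a * b⁻¹) * b * (b * a * b⁻¹)⁻¹ = a := by
  have h1 := id1 h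
  calc (b * a * b⁻¹) * b * (b * a * b⁻¹)⁻¹
      = (b * a * b⁻¹) * ((b * a * b⁻¹)⁻¹ * a * (b * a * b⁻¹)) * (b * a * b⁻¹)⁻¹ := by
        rw [h1]
    _ = a := by group

theorem id7 {a b : G} (h : a * b * a = b * a * b) :
    a⁻¹ * b * a = b * a * b⁻¹ := by
  calc a⁻¹ * b * a = a⁻¹ * (b * a * b) * b⁻¹ := by group
    _ = a⁻¹ * (a * b * a) * b⁻¹ := by rw [h]
    _ = b * a * b⁻¹ := by group

theorem id5 {a b e : G} (h : a * b * a = b * a * b) (hae : Commute a e) :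
    e⁻¹ * (e⁻¹ * (b * a * b⁻¹) * e) * e = (a * e)⁻¹ * (e⁻¹ * b * e) * (a * e) := by
  rw [eq_comm]
  calc (a * e)⁻¹ * (e⁻¹ * b * e) * (a * e)
      = e⁻¹ * (a⁻¹ * e⁻¹) * b * (e * a) * e := by group
    _ = e⁻¹ * (e⁻¹ * a⁻¹) * b * (e * a) * e := by rw [hae.inv_inv.eq]
    _ = e⁻¹ * (e⁻¹ * a⁻¹) * b * (a * e) * e := by rw [← hae.eq]
    _ = e⁻¹ * (e⁻¹ * (a⁻¹ * b * a) * e) * e := by group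
    _ = e⁻¹ * (e⁻¹ * (b * a * b⁻¹) * e) * e := by rw [id7 h]

theorem conj_commute {p q w : G} (h : Commute p q) :
    Commute (w⁻¹ * p * w) (w⁻¹ * q * w) := by
  show (w⁻¹ * p * w) * (w⁻¹ * q * w) = (w⁻¹ * q * w) * (w⁻¹ * p * w)
  calc (w⁻¹ * p * w) * (w⁻¹ * q * w) = w⁻¹ * (p * q) * w := by group
    _ = w⁻¹ * (q * p) * w := by rw [h.eq]
    _ = (w⁻¹ * q * w) * (w⁻¹ * p * w) := by group

theorem id6 {a b e z : G} (hae : Commute a e) (hze : Commute z e) (hzb : Commute z b) :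
    Commute ((a * e)⁻¹ * (e⁻¹ * b * e) * (a * e)) (a⁻¹ * z * a) := by
  have hY : a⁻¹ * z * a = (a * e)⁻¹ * z * (a * e) := by
    have hc : Commute e (a⁻¹ * z * a) :=
      ((hae.symm.inv_right).mul_right hze.symm).mul_right hae.symm
    calc a⁻¹ * z * a = e⁻¹ * (e * (a⁻¹ * z * a)) := by group
      _ = e⁻¹ * ((a⁻¹ * z * a) * e) := by rw [hc.eq]
      _ = (a * e)⁻¹ * z * (a * e) := by group
  rw [hY]
  exact conj_commute ((((hze.inv_right).mul_right hzb).mul_right hze).symm)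

theorem commute_conj3 {x a b e : G} (ha : Commute a x) (hb : Commute b x) (he : Commute e x) :
    Commute ((a * e)⁻¹ * (e⁻¹ * b * e) * (a * e)) x :=
  (((ha.mul_left he).inv_left).mul_left (((he.inv_left).mul_left hb).mul_left he)).mul_left
    (ha.mul_left he)

theorem commute_conj1 {x b e : G} (hb : Commute b x) (he : Commute e x) :
    Commute (e⁻¹ * b * e) x :=
  ((he.inv_left).mul_left hb).mul_left he

/-! ### Sequences -/

def Dd (c : ℕ → G) (i : ℕ) : G := c (i + 1) * c i * (c (i + 1))⁻¹

def Afrom (c : ℕ → G) (s k : ℕ) : List G := (List.range k).map fun i => c (i + s)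

def Dfrom (c : ℕ → G) (s k : ℕ) : List G := (List.range k).map fun i => Dd c (i + s)

theorem afrom_cons (c : ℕ → G) (s k : ℕ) : Afrom c s (k + 1) = c s :: Afrom c (s + 1) k := by
  simp only [Afrom, List.range_succ_eq_map, List.map_cons, List.map_map, Nat.zero_add]
  congr 1
  apply List.map_congr_left
  intro i _
  simp only [Function.comp_apply]
  congr 1
  omega

theorem afrom_snoc (c : ℕ → G) (s k : ℕ) : Afrom c s (k + 1) = Afrom c s k ++ [c (k + s)] := by
  simp only [Afrom, List.range_succ, List.map_append, List.map_cons, List.map_nil]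

theorem dfrom_cons (c : ℕ → G) (s k : ℕ) : Dfrom c s (k + 1) = Dd c s :: Dfrom c (s + 1) k := by
  simp only [Dfrom, List.range_succ_eq_map, List.map_cons, List.map_map, Nat.zero_add]
  congr 1
  apply List.map_congr_left
  intro i _
  simp only [Function.comp_apply]
  congr 1
  omega

theorem dfrom_snoc (c : ℕ → G) (s k : ℕ) : Dfrom c s (k + 1) = Dfrom c s k ++ [Dd c (k + s)] := by
  simp only [Dfrom, List.range_succ, List.map_append, List.map_cons, List.map_nil]

section Main

variable (g : ℕ) (c : ℕ → G)
variable (hb : ∀ i, 1 ≤ i → i + 1 ≤ 2 * g + 1 →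
      c i * c (i + 1) * c i = c (i + 1) * c i * c (i + 1))
variable (hco : ∀ i j, 1 ≤ i → j ≤ 2 * g + 1 → i + 2 ≤ j → c i * c j = c j * c i)

include hb in
/-- A `c s` travels right through the chain `d s, …, d (s+k-1)`, emerging as `c (s+k)`. -/
theorem travel : ∀ k s, 1 ≤ s → s + k ≤ 2 * g + 1 →
    (c s :: Dfrom c s k) ≋ (Dfrom c s k ++ [c (s + k)]) := by
  intro k
  induction k with
  | zero => intro s _ _; exact equiv_of_eq (by simp [Dfrom])
  | succ k ih =>
    intro s hs hsk
    rw [dfrom_cons]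
    have step1 : (c s :: Dd c s :: Dfrom c (s + 1) k) ≋ (Dd c s :: c (s + 1) :: Dfrom c (s + 1) k) := by
      simpa [Dd] using equiv_append [] (Dfrom c (s + 1) k) (pairL' (id1 (hb s hs (by omega))))
    refine step1.trans ?_
    have step2 := equiv_cons (Dd c s) (ih (s + 1) (by omega) (by omega))
    refine step2.trans (equiv_of_eq ?_)
    rw [show s + 1 + k = s + (k + 1) by omega]
    simp

include hb in
theorem travel' : ∀ k s, 1 ≤ s → s + k ≤ 2 * g + 1 →
    (Dfrom c s k ++ [c (s + k)]) ≋ (c s :: Dfrom c s k) :=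
  fun k s hs hsk => equiv_symm (travel g c hb k s hs hsk)

include hb hco in
/-- Stage 1: `(c s … c (s+k))² ∼ (d s … d (s+k-1), c (s+k) ^ (k+2))`. -/
theorem stage1 : ∀ k s, 1 ≤ s → s + k ≤ 2 * g + 1 →
    (Afrom c s (k + 1) ++ Afrom c s (k + 1)) ≋
      (Dfrom c s k ++ List.replicate (k + 2) (c (s + k))) := by
  intro k
  induction k with
  | zero =>
    intro s _ _
    refine equiv_of_eq ?_
    simp [Afrom, Dfrom, List.replicate, List.range_succ]
  | succ k ih =>
    intro s hs hsk
    rw [afrom_cons c s (k + 1), afrom_cons c (s + 1) k]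
    set T := Afrom c (s + 2) k with hT
    -- move the second copy's head `c s` left past `T`
    have hcommT : ∀ a ∈ T, Commute (c s) a := by
      intro a ha
      rw [hT, Afrom] at ha
      obtain ⟨i, hi, rfl⟩ := List.mem_map.mp ha
      rw [List.mem_range] at hi
      exact hco s (i + (s + 2)) hs (by omega) (by omega)
    calc (c s :: c (s + 1) :: T) ++ (c s :: c (s + 1) :: T)
        = [c s, c (s + 1)] ++ (T ++ [c s]) ++ (c (s + 1) :: T) := by simp
      _ ≋ [c s, c (s + 1)] ++ (c s :: T) ++ (c (s + 1) :: T) :=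
          equiv_append _ _ (move_left (c s) T hcommT)
      _ = [c s] ++ [c (s + 1), c s] ++ (T ++ c (s + 1) :: T) := by simp
      _ ≋ [c s] ++ [Dd c s, c (s + 1)] ++ (T ++ c (s + 1) :: T) :=
          equiv_append _ _ (pairR (c (s + 1)) (c s))
      _ = [] ++ [c s, Dd c s] ++ (c (s + 1) :: (T ++ c (s + 1) :: T)) := by simp
      _ ≋ [] ++ [Dd c s, c (s + 1)] ++ (c (s + 1) :: (T ++ c (s + 1) :: T)) :=
          equiv_append _ _ (pairL' (id1 (hb s hs (by omega))))
      _ = [Dd c s, c (s + 1)] ++ (Afrom c (s + 1) (k + 1) ++ Afrom c (s + 1) (k + 1)) := by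
          rw [afrom_cons c (s + 1) k, ← hT]; simp
      _ ≋ [Dd c s, c (s + 1)] ++ (Dfrom c (s + 1) k ++ List.replicate (k + 2) (c (s + 1 + k))) :=
          equiv_append_left _ (ih (s + 1) (by omega) (by omega))
      _ = [Dd c s] ++ (c (s + 1) :: Dfrom c (s + 1) k) ++ List.replicate (k + 2) (c (s + 1 + k)) := by
          simp
      _ ≋ [Dd c s] ++ (Dfrom c (s + 1) k ++ [c (s + 1 + k)]) ++ List.replicate (k + 2) (c (s + 1 + k)) :=
          equiv_append _ _ (travel g c hb k (s + 1) (by omega) (by omega))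
      _ = Dfrom c s (k + 1) ++ List.replicate (k + 1 + 2) (c (s + (k + 1))) := by
          rw [dfrom_cons c s k, show s + 1 + k = s + (k + 1) by omega]
          simp [List.replicate_succ]

include hb hco in
/-- Stage 2: `(c s … c (s+k))² ∼ (c s ^ (k+2), d s … d (s+k-1))`. -/
theorem stage2 : ∀ k s, 1 ≤ s → s + k ≤ 2 * g + 1 →
    (Afrom c s (k + 1) ++ Afrom c s (k + 1)) ≋
      (List.replicate (k + 2) (c s) ++ Dfrom c s k) := by
  intro k
  induction k with
  | zero =>
    intro s _ _
    refine equiv_of_eq ?_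
    simp [Afrom, Dfrom, List.replicate, List.range_succ]
  | succ k ih =>
    intro s hs hsk
    rw [afrom_snoc c s (k + 1), show k + 1 + s = k + s + 1 by omega]
    have hcommA : ∀ a ∈ Afrom c s k, Commute (c (k + s + 1)) a := by
      intro a ha
      rw [Afrom] at ha
      obtain ⟨i, hi, rfl⟩ := List.mem_map.mp ha
      rw [List.mem_range] at hi
      exact (hco (i + s) (k + s + 1) (by omega) (by omega) (by omega)).symm
    calc (Afrom c s (k + 1) ++ [c (k + s + 1)]) ++ (Afrom c s (k + 1) ++ [c (k + s + 1)])
        = Afrom c s (k + 1) ++ (c (k + s + 1) :: Afrom c s k) ++ [c (k + s), c (k + s + 1)] := by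
          rw [afrom_snoc c s k]; simp
      _ ≋ Afrom c s (k + 1) ++ (Afrom c s k ++ [c (k + s + 1)]) ++ [c (k + s), c (k + s + 1)] :=
          equiv_append _ _ (move_right (c (k + s + 1)) (Afrom c s k) hcommA)
      _ = (Afrom c s (k + 1) ++ Afrom c s k) ++ [c (k + s + 1), c (k + s)] ++ [c (k + s + 1)] := by
          simp
      _ ≋ (Afrom c s (k + 1) ++ Afrom c s k) ++ [c (k + s), Dd c (k + s)] ++ [c (k + s + 1)] :=
          equiv_append _ _ (pairL' (id7 (hb (k + s) (by omega) (by omega))))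
      _ = (Afrom c s (k + 1) ++ Afrom c s k) ++ [c (k + s)] ++ [Dd c (k + s), c (k + s + 1)] ++ [] := by
          simp
      _ ≋ (Afrom c s (k + 1) ++ Afrom c s k) ++ [c (k + s)] ++ [c (k + s), Dd c (k + s)] ++ [] :=
          equiv_append _ _ (pairR' (id2 (hb (k + s) (by omega) (by omega))))
      _ = (Afrom c s (k + 1) ++ Afrom c s (k + 1)) ++ [c (k + s), Dd c (k + s)] := by
          rw [afrom_snoc c s k]; simp
      _ ≋ (List.replicate (k + 2) (c s) ++ Dfrom c s k) ++ [c (k + s), Dd c (k + s)] :=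
          equiv_append_right _ (ih s hs (by omega))
      _ = List.replicate (k + 2) (c s) ++ (Dfrom c s k ++ [c (s + k)]) ++ [Dd c (k + s)] := by
          rw [show k + s = s + k by omega]; simp
      _ ≋ List.replicate (k + 2) (c s) ++ (c s :: Dfrom c s k) ++ [Dd c (k + s)] :=
          equiv_append _ _ (travel' g c hb k s hs (by omega))
      _ = List.replicate (k + 1 + 2) (c s) ++ Dfrom c s (k + 1) := by
          rw [dfrom_snoc c s k]
          simp [List.replicate_succ', List.append_assoc]

theorem pass_two {x e u v : G} (h1 : e⁻¹ * x * e = u) (h2 : e⁻¹ * u * e = v) :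
    ([x, e, e] : List G) ≋ [e, e, v] := by
  calc ([x, e, e] : List G) = [] ++ [x, e] ++ [e] := by simp
    _ ≋ [] ++ [e, u] ++ [e] := equiv_append _ _ (pairL' h1)
    _ = [e] ++ [u, e] ++ [] := by simp
    _ ≋ [e] ++ [e, v] ++ [] := equiv_append _ _ (pairL' h2)
    _ = [e, e, v] := by simp

def OddL (c : ℕ → G) (k : ℕ) : List G :=
  (((List.range k).map fun j => [c (2 * j + 1), c (2 * j + 1)]).flatten)

def FL (c : ℕ → G) (k : ℕ) : List G :=
  (List.range k).map fun j =>
    (c (2 * j + 1) * c (2 * j + 3))⁻¹ *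
      ((c (2 * j + 3))⁻¹ * c (2 * j + 2) * c (2 * j + 3)) *
      (c (2 * j + 1) * c (2 * j + 3))

def BL (c : ℕ → G) (k : ℕ) : List G :=
  (List.range k).map fun j => (c (2 * j + 3))⁻¹ * c (2 * j + 2) * c (2 * j + 3)

theorem oddl_snoc (c : ℕ → G) (k : ℕ) :
    OddL c (k + 1) = OddL c k ++ [c (2 * k + 1), c (2 * k + 1)] := by
  simp [OddL, List.range_succ]

theorem fl_snoc (c : ℕ → G) (k : ℕ) :
    FL c (k + 1) = FL c k ++ [(c (2 * k + 1) * c (2 * k + 3))⁻¹ *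
      ((c (2 * k + 3))⁻¹ * c (2 * k + 2) * c (2 * k + 3)) *
      (c (2 * k + 1) * c (2 * k + 3))] := by
  simp [FL, List.range_succ]

theorem bl_snoc (c : ℕ → G) (k : ℕ) :
    BL c (k + 1) = BL c k ++ [(c (2 * k + 3))⁻¹ * c (2 * k + 2) * c (2 * k + 3)] := by
  simp [BL, List.range_succ]

include hb hco in
theorem stage3 : ∀ gp, gp ≤ g →
    (List.replicate (2 * gp + 2) (c 1) ++ Dfrom c 1 (2 * gp)) ≋
      (OddL c gp ++ [c (2 * gp + 1), c (2 * gp + 1)] ++ FL c gp ++ BL c gp) := by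
  intro gp
  induction gp with
  | zero =>
    intro _
    refine equiv_of_eq ?_
    simp [OddL, FL, BL, Dfrom, List.replicate]
  | succ gp ih =>
    intro hgp
    have hgp' : gp ≤ g := by omega
    simp only [Nat.mul_succ]
    -- abbreviations
    have t1 : (c 1 :: Dfrom c 1 (2 * gp + 2)) ≋ (Dfrom c 1 (2 * gp + 2) ++ [c (2 * gp + 3)]) := by
      have := travel g c hb (2 * gp + 2) 1 le_rfl (by omega)
      rwa [show 1 + (2 * gp + 2) = 2 * gp + 3 by omega] at this
    have subc : ([Dd c (2 * gp + 2), c (2 * gp + 3), c (2 * gp + 3)] : List G) ≋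
        [c (2 * gp + 3), c (2 * gp + 3), (c (2 * gp + 3))⁻¹ * c (2 * gp + 2) * c (2 * gp + 3)] := by
      refine pass_two ?_ rfl
      show (c (2 * gp + 3))⁻¹ * (c (2 * gp + 3) * c (2 * gp + 2) * (c (2 * gp + 3))⁻¹) *
          c (2 * gp + 3) = c (2 * gp + 2)
      group
    have subd : ([Dd c (2 * gp + 1), c (2 * gp + 3), c (2 * gp + 3)] : List G) ≋
        [c (2 * gp + 3), c (2 * gp + 3),
         (c (2 * gp + 1) * c (2 * gp + 3))⁻¹ *
           ((c (2 * gp + 3))⁻¹ * c (2 * gp + 2) * c (2 * gp + 3)) *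
           (c (2 * gp + 1) * c (2 * gp + 3))] := by
      refine pass_two rfl ?_
      exact id5 (hb (2 * gp + 1) (by omega) (by omega))
        (hco (2 * gp + 1) (2 * gp + 3) (by omega) (by omega) (by omega))
    have hEE : ∀ a ∈ FL c gp ++ BL c gp, ∀ b ∈ ([c (2 * gp + 3), c (2 * gp + 3)] : List G),
        Commute a b := by
      intro a ha b hbmem
      have hbE : b = c (2 * gp + 3) := by simpa using hbmem
      subst hbE
      rcases List.mem_append.mp ha with hFa | hBa
      · obtain ⟨j, hj, rfl⟩ := List.mem_map.mp hFa
        rw [List.mem_range] at hj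
        exact commute_conj3
          (hco (2 * j + 1) (2 * gp + 3) (by omega) (by omega) (by omega))
          (hco (2 * j + 2) (2 * gp + 3) (by omega) (by omega) (by omega))
          (hco (2 * j + 3) (2 * gp + 3) (by omega) (by omega) (by omega))
      · obtain ⟨j, hj, rfl⟩ := List.mem_map.mp hBa
        rw [List.mem_range] at hj
        exact commute_conj1
          (hco (2 * j + 2) (2 * gp + 3) (by omega) (by omega) (by omega))
          (hco (2 * j + 3) (2 * gp + 3) (by omega) (by omega) (by omega))
    have hFel : ∀ a ∈ BL c gp,
        ∀ b ∈ ([(c (2 * gp + 1) * c (2 * gp + 3))⁻¹ *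
           ((c (2 * gp + 3))⁻¹ * c (2 * gp + 2) * c (2 * gp + 3)) *
           (c (2 * gp + 1) * c (2 * gp + 3))] : List G), Commute a b := by
      intro a ha b hbmem
      have hbF : b = (c (2 * gp + 1) * c (2 * gp + 3))⁻¹ *
           ((c (2 * gp + 3))⁻¹ * c (2 * gp + 2) * c (2 * gp + 3)) *
           (c (2 * gp + 1) * c (2 * gp + 3)) := by simpa using hbmem
      subst hbF
      obtain ⟨j, hj, rfl⟩ := List.mem_map.mp ha
      rw [List.mem_range] at hj
      by_cases hj1 : j + 1 = gp
      · rw [show 2 * j + 3 = 2 * gp + 1 by omega, show 2 * j + 2 = 2 * gp by omega]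
        exact (id6
          (hco (2 * gp + 1) (2 * gp + 3) (by omega) (by omega) (by omega))
          (hco (2 * gp) (2 * gp + 3) (by omega) (by omega) (by omega))
          (hco (2 * gp) (2 * gp + 2) (by omega) (by omega) (by omega))).symm
      · refine (commute_conj3 ?_ ?_ ?_).symm
        · exact ((commute_conj1
            (hco (2 * j + 2) (2 * gp + 1) (by omega) (by omega) (by omega))
            (hco (2 * j + 3) (2 * gp + 1) (by omega) (by omega) (by omega)))).symm
        · exact ((commute_conj1
            (hco (2 * j + 2) (2 * gp + 2) (by omega) (by omega) (by omega))
            (hco (2 * j + 3) (2 * gp + 2) (by omega) (by omega) (by omega)))).symm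
        · exact ((commute_conj1
            (hco (2 * j + 2) (2 * gp + 3) (by omega) (by omega) (by omega))
            (hco (2 * j + 3) (2 * gp + 3) (by omega) (by omega) (by omega)))).symm
    calc List.replicate (2 * gp + 2 + 2) (c 1) ++ Dfrom c 1 (2 * gp + 2)
        = List.replicate (2 * gp + 2) (c 1) ++ [c 1] ++ (c 1 :: Dfrom c 1 (2 * gp + 2)) := by
          rw [List.replicate_add]; simp
      _ ≋ List.replicate (2 * gp + 2) (c 1) ++ [c 1] ++
            (Dfrom c 1 (2 * gp + 2) ++ [c (2 * gp + 3)]) :=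
          equiv_append_left _ t1
      _ = List.replicate (2 * gp + 2) (c 1) ++ (c 1 :: Dfrom c 1 (2 * gp + 2)) ++
            [c (2 * gp + 3)] := by simp
      _ ≋ List.replicate (2 * gp + 2) (c 1) ++ (Dfrom c 1 (2 * gp + 2) ++ [c (2 * gp + 3)]) ++
            [c (2 * gp + 3)] := equiv_append _ _ t1
      _ = (List.replicate (2 * gp + 2) (c 1) ++ Dfrom c 1 (2 * gp) ++ [Dd c (2 * gp + 1)]) ++
            [Dd c (2 * gp + 2), c (2 * gp + 3), c (2 * gp + 3)] ++ [] := by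
          rw [dfrom_snoc c 1 (2 * gp + 1), dfrom_snoc c 1 (2 * gp),
            show 2 * gp + 1 + 1 = 2 * gp + 2 by omega, show 2 * gp + (1:ℕ) = 2 * gp + 1 by omega]
          simp
      _ ≋ (List.replicate (2 * gp + 2) (c 1) ++ Dfrom c 1 (2 * gp) ++ [Dd c (2 * gp + 1)]) ++
            [c (2 * gp + 3), c (2 * gp + 3),
             (c (2 * gp + 3))⁻¹ * c (2 * gp + 2) * c (2 * gp + 3)] ++ [] :=
          equiv_append _ _ subc
      _ = (List.replicate (2 * gp + 2) (c 1) ++ Dfrom c 1 (2 * gp)) ++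
            [Dd c (2 * gp + 1), c (2 * gp + 3), c (2 * gp + 3)] ++
            [(c (2 * gp + 3))⁻¹ * c (2 * gp + 2) * c (2 * gp + 3)] := by simp
      _ ≋ (List.replicate (2 * gp + 2) (c 1) ++ Dfrom c 1 (2 * gp)) ++
            [c (2 * gp + 3), c (2 * gp + 3),
             (c (2 * gp + 1) * c (2 * gp + 3))⁻¹ *
               ((c (2 * gp + 3))⁻¹ * c (2 * gp + 2) * c (2 * gp + 3)) *
               (c (2 * gp + 1) * c (2 * gp + 3))] ++
            [(c (2 * gp + 3))⁻¹ * c (2 * gp + 2) * c (2 * gp + 3)] :=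
          equiv_append _ _ subd
      _ = (List.replicate (2 * gp + 2) (c 1) ++ Dfrom c 1 (2 * gp)) ++
            ([c (2 * gp + 3), c (2 * gp + 3),
             (c (2 * gp + 1) * c (2 * gp + 3))⁻¹ *
               ((c (2 * gp + 3))⁻¹ * c (2 * gp + 2) * c (2 * gp + 3)) *
               (c (2 * gp + 1) * c (2 * gp + 3)),
             (c (2 * gp + 3))⁻¹ * c (2 * gp + 2) * c (2 * gp + 3)]) := by simp
      _ ≋ (OddL c gp ++ [c (2 * gp + 1), c (2 * gp + 1)] ++ FL c gp ++ BL c gp) ++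
            ([c (2 * gp + 3), c (2 * gp + 3),
             (c (2 * gp + 1) * c (2 * gp + 3))⁻¹ *
               ((c (2 * gp + 3))⁻¹ * c (2 * gp + 2) * c (2 * gp + 3)) *
               (c (2 * gp + 1) * c (2 * gp + 3)),
             (c (2 * gp + 3))⁻¹ * c (2 * gp + 2) * c (2 * gp + 3)]) :=
          equiv_append_right _ (ih hgp')
      _ = (OddL c gp ++ [c (2 * gp + 1), c (2 * gp + 1)]) ++
            ((FL c gp ++ BL c gp) ++ [c (2 * gp + 3), c (2 * gp + 3)]) ++
            ([(c (2 * gp + 1) * c (2 * gp + 3))⁻¹ *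
               ((c (2 * gp + 3))⁻¹ * c (2 * gp + 2) * c (2 * gp + 3)) *
               (c (2 * gp + 1) * c (2 * gp + 3))] ++
             [(c (2 * gp + 3))⁻¹ * c (2 * gp + 2) * c (2 * gp + 3)]) := by simp
      _ ≋ (OddL c gp ++ [c (2 * gp + 1), c (2 * gp + 1)]) ++
            ([c (2 * gp + 3), c (2 * gp + 3)] ++ (FL c gp ++ BL c gp)) ++
            ([(c (2 * gp + 1) * c (2 * gp + 3))⁻¹ *
               ((c (2 * gp + 3))⁻¹ * c (2 * gp + 2) * c (2 * gp + 3)) *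
               (c (2 * gp + 1) * c (2 * gp + 3))] ++
             [(c (2 * gp + 3))⁻¹ * c (2 * gp + 2) * c (2 * gp + 3)]) :=
          equiv_append _ _ (block_right _ _ hEE)
      _ = (OddL c gp ++ [c (2 * gp + 1), c (2 * gp + 1)] ++
             [c (2 * gp + 3), c (2 * gp + 3)] ++ FL c gp) ++
            (BL c gp ++ [(c (2 * gp + 1) * c (2 * gp + 3))⁻¹ *
               ((c (2 * gp + 3))⁻¹ * c (2 * gp + 2) * c (2 * gp + 3)) *
               (c (2 * gp + 1) * c (2 * gp + 3))]) ++
            [(c (2 * gp + 3))⁻¹ * c (2 * gp + 2) * c (2 * gp + 3)] := by simp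
      _ ≋ (OddL c gp ++ [c (2 * gp + 1), c (2 * gp + 1)] ++
             [c (2 * gp + 3), c (2 * gp + 3)] ++ FL c gp) ++
            ([(c (2 * gp + 1) * c (2 * gp + 3))⁻¹ *
               ((c (2 * gp + 3))⁻¹ * c (2 * gp + 2) * c (2 * gp + 3)) *
               (c (2 * gp + 1) * c (2 * gp + 3))] ++ BL c gp) ++
            [(c (2 * gp + 3))⁻¹ * c (2 * gp + 2) * c (2 * gp + 3)] :=
          equiv_append _ _ (block_right _ _ hFel)
      _ = OddL c (gp + 1) ++ [c (2 * gp + 2 + 1), c (2 * gp + 2 + 1)] ++ FL c (gp + 1) ++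
            BL c (gp + 1) := by
          rw [oddl_snoc, fl_snoc, bl_snoc, show 2 * gp + 2 + 1 = 2 * gp + 3 by omega]
          simp

end Main
end Hur

/-- with `d j = c (j+1) * c j * (c (j+1))⁻¹`,
`d̄ j = (c (j+1))⁻¹ * c j * c (j+1)`,
`f j = (c (j-1) * c (j+1))⁻¹ * d̄ j * (c (j-1) * c (j+1))` and the convention `c 0 = 1`,
the sequence `(c 1, …, c (2g+1))` repeated `4` times is Hurwitz equivalent to
`(d 1, …, d (2g), c 1, c 1, c 3, c 3, …, c (2g-1), c (2g-1), (c (2g+1))^{2g+4},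
f 2, f 4, …, f (2g), d̄ 2, d̄ 4, …, d̄ (2g))`. -/
theorem statement12 {G : Type*} [Group G] (g : ℕ) (hg : 1 ≤ g) (c : ℕ → G)
    (hc0 : c 0 = 1)
    (hbraid : ∀ i, 1 ≤ i → i + 1 ≤ 2 * g + 1 →
      c i * c (i + 1) * c i = c (i + 1) * c i * c (i + 1))
    (hcomm : ∀ i j, 1 ≤ i → j ≤ 2 * g + 1 → i + 2 ≤ j → c i * c j = c j * c i) :
    HurwitzEquiv
      (seqAsc c 1 (2 * g + 1) ++ seqAsc c 1 (2 * g + 1) ++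
        seqAsc c 1 (2 * g + 1) ++ seqAsc c 1 (2 * g + 1))
      (((List.range (2 * g)).map fun j => c (j + 2) * c (j + 1) * (c (j + 2))⁻¹) ++
        (((List.range g).map fun j => [c (2 * j + 1), c (2 * j + 1)]).flatten) ++
        List.replicate (2 * g + 4) (c (2 * g + 1)) ++
        ((List.range g).map fun j =>
          (c (2 * j + 1) * c (2 * j + 3))⁻¹ *
            ((c (2 * j + 3))⁻¹ * c (2 * j + 2) * c (2 * j + 3)) *
            (c (2 * j + 1) * c (2 * j + 3))) ++
        ((List.range g).map fun j =>
          (c (2 * j + 3))⁻¹ * c (2 * j + 2) * c (2 * j + 3))) := by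
  have hA : seqAsc c 1 (2 * g + 1) = Hur.Afrom c 1 (2 * g + 1) := by
    unfold seqAsc Hur.Afrom
    rw [show 2 * g + 1 + 1 - 1 = 2 * g + 1 by omega]
    exact List.map_congr_left fun i _ => by rw [Nat.add_comm]
  rw [hA]
  show HurwitzEquiv
    (Hur.Afrom c 1 (2 * g + 1) ++ Hur.Afrom c 1 (2 * g + 1) ++
      Hur.Afrom c 1 (2 * g + 1) ++ Hur.Afrom c 1 (2 * g + 1))
    (Hur.Dfrom c 1 (2 * g) ++ Hur.OddL c g ++
      List.replicate (2 * g + 4) (c (2 * g + 1)) ++ Hur.FL c g ++ Hur.BL c g)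
  have s1 : HurwitzEquiv (Hur.Afrom c 1 (2 * g + 1) ++ Hur.Afrom c 1 (2 * g + 1))
      (Hur.Dfrom c 1 (2 * g) ++ List.replicate (2 * g + 2) (c (2 * g + 1))) := by
    have := Hur.stage1 g c hbraid hcomm (2 * g) 1 le_rfl (by omega)
    rwa [show 1 + 2 * g = 2 * g + 1 by omega] at this
  have s2 : HurwitzEquiv (Hur.Afrom c 1 (2 * g + 1) ++ Hur.Afrom c 1 (2 * g + 1))
      (List.replicate (2 * g + 2) (c 1) ++ Hur.Dfrom c 1 (2 * g)) :=
    Hur.stage2 g c hbraid hcomm (2 * g) 1 le_rfl (by omega)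
  have s3 : HurwitzEquiv (List.replicate (2 * g + 2) (c 1) ++ Hur.Dfrom c 1 (2 * g))
      (Hur.OddL c g ++ [c (2 * g + 1), c (2 * g + 1)] ++ Hur.FL c g ++ Hur.BL c g) :=
    Hur.stage3 g c hbraid hcomm g le_rfl
  have hOdd : ∀ a ∈ List.replicate (2 * g + 2) (c (2 * g + 1)), ∀ b ∈ Hur.OddL c g,
      Commute a b := by
    intro a ha b hbmem
    have haE : a = c (2 * g + 1) := List.eq_of_mem_replicate ha
    subst haE
    obtain ⟨l, hl, hbl⟩ := List.mem_flatten.mp hbmem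
    obtain ⟨j, hj, rfl⟩ := List.mem_map.mp hl
    rw [List.mem_range] at hj
    have hbE : b = c (2 * j + 1) := by simpa using hbl
    subst hbE
    exact (hcomm (2 * j + 1) (2 * g + 1) (by omega) (by omega) (by omega)).symm
  calc Hur.Afrom c 1 (2 * g + 1) ++ Hur.Afrom c 1 (2 * g + 1) ++
      Hur.Afrom c 1 (2 * g + 1) ++ Hur.Afrom c 1 (2 * g + 1)
      = (Hur.Afrom c 1 (2 * g + 1) ++ Hur.Afrom c 1 (2 * g + 1)) ++
        (Hur.Afrom c 1 (2 * g + 1) ++ Hur.Afrom c 1 (2 * g + 1)) := by simp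
    _ ≋ (Hur.Dfrom c 1 (2 * g) ++ List.replicate (2 * g + 2) (c (2 * g + 1))) ++
        (Hur.Afrom c 1 (2 * g + 1) ++ Hur.Afrom c 1 (2 * g + 1)) :=
        Hur.equiv_append_right _ s1
    _ ≋ (Hur.Dfrom c 1 (2 * g) ++ List.replicate (2 * g + 2) (c (2 * g + 1))) ++
        (List.replicate (2 * g + 2) (c 1) ++ Hur.Dfrom c 1 (2 * g)) :=
        Hur.equiv_append_left _ s2
    _ ≋ (Hur.Dfrom c 1 (2 * g) ++ List.replicate (2 * g + 2) (c (2 * g + 1))) ++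
        (Hur.OddL c g ++ [c (2 * g + 1), c (2 * g + 1)] ++ Hur.FL c g ++ Hur.BL c g) :=
        Hur.equiv_append_left _ s3
    _ = Hur.Dfrom c 1 (2 * g) ++
        (List.replicate (2 * g + 2) (c (2 * g + 1)) ++ Hur.OddL c g) ++
        ([c (2 * g + 1), c (2 * g + 1)] ++ Hur.FL c g ++ Hur.BL c g) := by simp
    _ ≋ Hur.Dfrom c 1 (2 * g) ++
        (Hur.OddL c g ++ List.replicate (2 * g + 2) (c (2 * g + 1))) ++
        ([c (2 * g + 1), c (2 * g + 1)] ++ Hur.FL c g ++ Hur.BL c g) :=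
        Hur.equiv_append _ _ (Hur.block_right _ _ hOdd)
    _ = Hur.Dfrom c 1 (2 * g) ++ Hur.OddL c g ++
        List.replicate (2 * g + 4) (c (2 * g + 1)) ++ Hur.FL c g ++ Hur.BL c g := by
        rw [show 2 * g + 4 = (2 * g + 2) + 2 by omega, List.replicate_add]
        simp [List.replicate_succ', List.append_assoc]
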